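/- Let M and N be intermediate fields of an algebraic extension of K, with N/K a finite Galois extension. Then the compositum MN is isomorphic to M ⊗_K N as a K-algebra if and only if M ∩ N = K. -/

import Mathlib

open Polynomial IntermediateField in
private theorem stmt17_deg_eq (K Ω : Type*) [Field K] [Field Ω] [Algebra K Ω]
    (M N : IntermediateField K Ω) [Normal K N]
    (a : Ω) (haN : a ∈ N) (hint : IsIntegral K a) (hMN : M ⊓ N = ⊥) :
    (minpoly ↥M a).natDegree = (minpoly K a).natDegree := by
  have hintM : IsIntegral ↥M a := hint.tower_top
  set f := minpoly K a with hf
  set g := minpoly ↥M a with hg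
  set F := f.map (algebraMap K Ω) with hF
  set G := g.map (algebraMap ↥M Ω) with hG
  have hgmonic : g.Monic := minpoly.monic hintM
  have hfmonic : f.Monic := minpoly.monic hint
  have hGmonic : G.Monic := hgmonic.map _
  have hFmonic : F.Monic := hfmonic.map _
  have hF0 : F ≠ 0 := hFmonic.ne_zero
  -- G divides F
  have hgdvd : g ∣ f.map (algebraMap K ↥M) := minpoly.dvd_map_of_isScalarTower K ↥M a
  have hGF : G ∣ F := by
    have := Polynomial.map_dvd (algebraMap ↥M Ω) hgdvd
    rwa [Polynomial.map_map, ← IsScalarTower.algebraMap_eq] at this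
  -- f splits in N
  have haN' : algebraMap ↥N Ω ⟨a, haN⟩ = a := rfl
  have hsplitN : Splits (f.map (algebraMap K ↥N)) := by
    have := Normal.splits (F := K) (K := ↥N) inferInstance ⟨a, haN⟩
    rwa [← minpoly.algebraMap_eq (algebraMap ↥N Ω).injective ⟨a, haN⟩, haN'] at this
  have hFsplit : Splits F := by
    rw [hF, IsScalarTower.algebraMap_eq K ↥N Ω, ← Polynomial.map_map]
    exact hsplitN.map _
  -- roots of F are in N
  have hroots : ∀ r ∈ F.roots, r ∈ N := by
    intro r hr
    have : F = (f.map (algebraMap K ↥N)).map (algebraMap ↥N Ω) := by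
      rw [Polynomial.map_map, ← IsScalarTower.algebraMap_eq]
    rw [this, hsplitN.roots_map] at hr
    obtain ⟨s, _, rfl⟩ := Multiset.mem_map.1 hr
    exact s.2
  have hGroots : ∀ r ∈ G.roots, r ∈ N := fun r hr =>
    hroots r (Multiset.mem_of_le (roots.le_of_dvd hF0 hGF) hr)
  have hGsplit : Splits G := hFsplit.of_dvd hF0 hGF
  have hGeq : G = (G.roots.map fun r => X - C r).prod :=
    hGsplit.eq_prod_roots_of_monic hGmonic
  -- coefficients of G lie in N
  have hcoeffN : ∀ i, G.coeff i ∈ N := by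
    have hmem : G ∈ Polynomial.lifts (algebraMap ↥N Ω) := by
      rw [hGeq]
      refine Subsemiring.multiset_prod_mem _ _ fun x hx => ?_
      obtain ⟨r, hr, rfl⟩ := Multiset.mem_map.1 hx
      refine ⟨X - C ⟨r, hGroots r hr⟩, ?_⟩
      simp [Polynomial.map_sub]
    intro i
    obtain ⟨r, hri⟩ := (Polynomial.lifts_iff_coeff_lifts _).1 hmem i
    exact hri ▸ r.2
  -- coefficients of G lie in M
  have hcoeffM : ∀ i, G.coeff i ∈ M := by
    intro i
    rw [hG, Polynomial.coeff_map]
    exact (g.coeff i).2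
  -- so coefficients of G lie in K
  have hmemK : G ∈ Polynomial.lifts (algebraMap K Ω) := by
    rw [Polynomial.lifts_iff_coeff_lifts]
    intro i
    have : G.coeff i ∈ (⊥ : IntermediateField K Ω) := hMN ▸ ⟨hcoeffM i, hcoeffN i⟩
    rwa [IntermediateField.mem_bot] at this
  obtain ⟨q, hq⟩ := hmemK
  rw [Polynomial.coe_mapRingHom] at hq
  have hG0 : G ≠ 0 := hGmonic.ne_zero
  have hq0 : q ≠ 0 := fun h => hG0 (by rw [← hq, h, Polynomial.map_zero])
  have haq : Polynomial.aeval a q = 0 := by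
    rw [Polynomial.aeval_def, ← Polynomial.eval_map, hq, hG, Polynomial.eval_map,
      ← Polynomial.aeval_def]
    exact minpoly.aeval ↥M a
  have hfq : f ∣ q := minpoly.dvd K a haq
  have hinj : Function.Injective (algebraMap K Ω) := (algebraMap K Ω).injective
  have h1 : f.natDegree ≤ q.natDegree := Polynomial.natDegree_le_of_dvd hfq hq0
  have h2 : q.natDegree = G.natDegree := (natDegree_map_eq_of_injective hinj q).symm.trans (by rw [hq])
  have h3 : G.natDegree = g.natDegree := natDegree_map_eq_of_injective (algebraMap ↥M Ω).injective g
  have h4 : g.natDegree ≤ f.natDegree := by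
    have := Polynomial.natDegree_le_of_dvd hgdvd ((hfmonic.map (algebraMap K ↥M)).ne_zero)
    rwa [natDegree_map_eq_of_injective (algebraMap K ↥M).injective] at this
  omega

open Polynomial IntermediateField in
private theorem stmt17_bwd (K Ω : Type*) [Field K] [Field Ω] [Algebra K Ω] [Algebra.IsAlgebraic K Ω]
    (M N : IntermediateField K Ω) [FiniteDimensional K N] [IsGalois K N]
    (h : M ⊓ N = ⊥) : Function.Injective (Algebra.TensorProduct.productMap M.val N.val) := by
  obtain ⟨α, hα⟩ := Field.exists_primitive_element K ↥N
  set a : Ω := (α : Ω) with ha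
  have haN : a ∈ N := α.2
  have hNa : K⟮a⟯ = N := by
    have := congrArg (IntermediateField.map N.val) hα
    rwa [IntermediateField.adjoin_map, Set.image_singleton, ← AlgHom.fieldRange_eq_map,
      IntermediateField.fieldRange_val] at this
  have hint : IsIntegral K a := Algebra.IsIntegral.isIntegral a
  have hdeg : (minpoly ↥M a).natDegree = (minpoly K a).natDegree :=
    stmt17_deg_eq K Ω M N a haN hint h
  let pb := IntermediateField.adjoin.powerBasis hint
  let b : Module.Basis (Fin pb.dim) K N.toSubalgebra :=
    pb.basis.map (IntermediateField.equivOfEq hNa).toLinearEquiv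
  have hdim : pb.dim = (minpoly K a).natDegree := rfl
  have hb : ∀ i, (N.toSubalgebra.val (b i) : Ω) = a ^ (i : ℕ) := by
    intro i
    show ((IntermediateField.equivOfEq hNa) (pb.basis i) : Ω) = _
    rw [PowerBasis.coe_basis]
    simp [pb, IntermediateField.adjoin.powerBasis_gen]
  have H : LinearIndependent M.toSubalgebra (N.toSubalgebra.val ∘ b) := by
    have h1 : LinearIndependent ↥M fun i : Fin ((minpoly ↥M a).natDegree) => a ^ (i : ℕ) :=
      linearIndependent_pow a
    rw [hdeg] at h1
    have : (N.toSubalgebra.val ∘ b) = fun i : Fin pb.dim => a ^ (i : ℕ) := funext hb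
    rw [this]
    exact h1
  exact (Subalgebra.LinearDisjoint.of_basis_right M.toSubalgebra N.toSubalgebra b H).injective


/-- Let `M`, `N` be intermediate fields of an algebraic extension `Ω/K` with `N/K`
finite Galois. Then the multiplication map `M ⊗_K N → MN` is an isomorphism (i.e.
the map `M ⊗_K N → Ω` is injective, its image being the compositum) if and only if
`M ∩ N = K`. -/
theorem stmt17 (K Ω : Type*) [Field K] [Field Ω] [Algebra K Ω] [Algebra.IsAlgebraic K Ω]
    (M N : IntermediateField K Ω) [FiniteDimensional K N] [IsGalois K N] :
    Function.Injective (Algebra.TensorProduct.productMap M.val N.val) ↔ M ⊓ N = ⊥ := by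
  constructor
  · intro h
    exact (IntermediateField.linearDisjoint_iff'.2 ⟨h⟩).inf_eq_bot
  · exact stmt17_bwd K Ω M N
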